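/- Let T be a monad on a category A. The Kleisli adjunction of T induces a comonad W_Kl on the Kleisli category Kl(T), and the Eilenberg–Moore adjunction of T induces the comonad W_EM = forget_T ⋙ free_T on Alg(T). If A, Kl(T) and Alg(T) are idempotent complete, then the Eilenberg–Moore category of W_Kl-coalgebras is equivalent to the Eilenberg–Moore category of W_EM-coalgebras. (In other words, the initial and the final resolution of a monad induce equivalent categories of coalgebras.) -/

import Mathlib

open CategoryTheory


namespace KleisliEMAux

variable {C : Type*} [Category C] {T : Monad C}

/-- Reinterpret an object of the base category as a Kleisli object. -/
def klOf (T : Monad C) (X : C) : Kleisli T := Kleisli.mk T X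

/-- Reinterpret a Kleisli object as an object of the base category. -/
def obj' (X : Kleisli T) : C := X.of

/-- Reinterpret a Kleisli morphism as a morphism of the base category. -/
def hom' {X Y : Kleisli T} (f : X ⟶ Y) : obj' X ⟶ T.obj (obj' Y) := f.of

/-- Reinterpret a morphism of the base category as a Kleisli morphism. -/
def kl {X Y : Kleisli T} (f : obj' X ⟶ T.obj (obj' Y)) : X ⟶ Y := Kleisli.Hom.mk f

@[simp] lemma hom'_kl {X Y : Kleisli T} (f : obj' X ⟶ T.obj (obj' Y)) : hom' (kl f) = f := rfl
@[simp] lemma kl_hom' {X Y : Kleisli T} (f : X ⟶ Y) : kl (hom' f) = f := rfl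

lemma kl_comp {X Y Z : Kleisli T} (f : X ⟶ Y) (g : Y ⟶ Z) :
    hom' (f ≫ g) = hom' f ≫ T.map (hom' g) ≫ T.μ.app (obj' Z) := rfl

lemma kl_id (X : Kleisli T) : hom' (𝟙 X) = T.η.app (obj' X) := rfl

/-- The comonad on the Kleisli category induced by the Kleisli adjunction. -/
abbrev WKl (T : Monad C) : Comonad (Kleisli T) := (Kleisli.Adjunction.adj T).toComonad

/-- The comonad on the Eilenberg-Moore category induced by the EM adjunction. -/
abbrev WEM (T : Monad C) : Comonad T.Algebra := T.adj.toComonad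

lemma obj'_WKl (X : Kleisli T) : obj' ((WKl T : Kleisli T ⥤ Kleisli T).obj X) = T.obj (obj' X) :=
  rfl

lemma eps_Kl (X : Kleisli T) : hom' ((WKl T).ε.app X) = 𝟙 (T.obj (obj' X)) := rfl

lemma delta_Kl (X : Kleisli T) :
    hom' ((WKl T).δ.app X)
      = T.η.app (T.obj (obj' X)) ≫ T.η.app (T.obj (T.obj (obj' X))) := rfl

lemma WKl_map {X Y : Kleisli T} (g : X ⟶ Y) :
    hom' ((WKl T : Kleisli T ⥤ Kleisli T).map g)
      = (T.map (hom' g) ≫ T.μ.app (obj' Y)) ≫ T.η.app (T.obj (obj' Y)) := rfl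

lemma WEM_obj (P : T.Algebra) : (WEM T : T.Algebra ⥤ T.Algebra).obj P = T.free.obj P.A := rfl

lemma WEM_map_f {P Q : T.Algebra} (m : P ⟶ Q) :
    ((WEM T : T.Algebra ⥤ T.Algebra).map m).f = T.map m.f := rfl

lemma eps_EM_f (P : T.Algebra) : ((WEM T).ε.app P).f = P.a := by simp; rfl

lemma delta_EM_f (P : T.Algebra) : ((WEM T).δ.app P).f = T.map (T.η.app P.A) := by simp; rfl

variable (T)

/-- The comparison functor from the Kleisli category to the Eilenberg–Moore category. -/
def L : Kleisli T ⥤ T.Algebra where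
  obj X := T.free.obj (obj' X)
  map {X Y} f :=
    { f := T.map (hom' f) ≫ T.μ.app (obj' Y)
      h := by
        show T.map (T.map (hom' f) ≫ T.μ.app (obj' Y)) ≫ T.μ.app (obj' Y) = T.μ.app (obj' X) ≫ T.map (hom' f) ≫ T.μ.app (obj' Y)
        rw [Functor.map_comp, Category.assoc, T.assoc,
          ← T.μ.naturality_assoc (hom' f)]
        rfl }
  map_id X := by
    ext
    show T.map (T.η.app (obj' X)) ≫ T.μ.app (obj' X) = 𝟙 (T.obj (obj' X))
    rw [T.right_unit]
    rfl
  map_comp {X Y Z} f g := by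
    ext
    show T.map (hom' (f ≫ g)) ≫ T.μ.app (obj' Z) = (T.map (hom' f) ≫ T.μ.app (obj' Y)) ≫ T.map (hom' g) ≫ T.μ.app (obj' Z)
    rw [kl_comp]
    simp only [Functor.map_comp, Category.assoc, T.assoc]
    rw [← T.μ.naturality_assoc (hom' g)]
    rfl

variable {T}

@[simp] lemma L_obj (X : Kleisli T) : (L T).obj X = T.free.obj (obj' X) := rfl

@[simp] lemma L_map_f {X Y : Kleisli T} (f : X ⟶ Y) :
    ((L T).map f).f = T.map (hom' f) ≫ T.μ.app (obj' Y) := rfl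

/-- preimage under `L` -/
def Lpre {X Y : Kleisli T} (m : (L T).obj X ⟶ (L T).obj Y) : X ⟶ Y :=
  kl (T.η.app (obj' X) ≫ m.f)

theorem L_map_Lpre {X Y : Kleisli T} (m : (L T).obj X ⟶ (L T).obj Y) :
    (L T).map (Lpre m) = m := by
  ext
  have hm := m.h
  dsimp at hm ⊢
  have key : ∀ (a b : C) (g : T.obj a ⟶ T.obj b), T.map g ≫ T.μ.app b = T.μ.app a ≫ g →
      T.map (T.η.app a ≫ g) ≫ T.μ.app b = g := by
    intro a b g hg
    rw [Functor.map_comp, Category.assoc, hg, ← Category.assoc, T.right_unit]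
    simp
  exact key _ _ m.f hm

theorem Lpre_L {X Y : Kleisli T} (f : X ⟶ Y) : Lpre ((L T).map f) = f := by
  rw [Lpre, L_map_f, ← T.η.naturality_assoc (hom' f)]
  show kl (hom' f ≫ T.η.app _ ≫ T.μ.app _) = f
  rw [T.left_unit]
  show kl (hom' f ≫ 𝟙 _) = f
  rw [Category.comp_id, kl_hom']

theorem L_faithful {X Y : Kleisli T} {f g : X ⟶ Y} (h : (L T).map f = (L T).map g) : f = g := by
  rw [← Lpre_L f, h, Lpre_L]

/-- `L` intertwines the two comonads. -/
theorem L_W {X Y : Kleisli T} (g : X ⟶ Y) :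
    (WEM T : T.Algebra ⥤ T.Algebra).map ((L T).map g)
      = (L T).map ((WKl T : Kleisli T ⥤ Kleisli T).map g) := by
  ext
  rw [WEM_map_f, L_map_f, L_map_f, WKl_map]
  show T.map (T.map (hom' g) ≫ T.μ.app (obj' Y)) =
    T.map ((T.map (hom' g) ≫ T.μ.app (obj' Y)) ≫ T.η.app (T.obj (obj' Y))) ≫
      T.μ.app (T.obj (obj' Y))
  conv_rhs => rw [Functor.map_comp, Functor.map_comp, Category.assoc, Category.assoc,
    T.right_unit]
  simp

/-- `L` intertwines the counits. -/
theorem L_eps (X : Kleisli T) :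
    (L T).map ((WKl T).ε.app X) = (WEM T).ε.app ((L T).obj X) := by
  ext
  rw [L_map_f, eps_Kl, eps_EM_f]
  show T.map (𝟙 (T.obj (obj' X))) ≫ T.μ.app (obj' X) = T.μ.app (obj' X)
  rw [CategoryTheory.Functor.map_id, Category.id_comp]

/-- `L` intertwines the comultiplications. -/
theorem L_delta (X : Kleisli T) :
    (L T).map ((WKl T).δ.app X) = (WEM T).δ.app ((L T).obj X) := by
  ext
  rw [L_map_f, delta_Kl, delta_EM_f]
  show T.map (T.η.app (T.obj (obj' X)) ≫ T.η.app (T.obj (T.obj (obj' X)))) ≫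
      T.μ.app (T.obj (T.obj (obj' X))) = T.map (T.η.app (T.obj (obj' X)))
  rw [Functor.map_comp, Category.assoc, T.right_unit]
  simp

end KleisliEMAux

namespace KleisliEMAux

variable {C : Type*} [Category C] (T : Monad C)

@[simp] lemma obj'_klOf (X : C) : obj' (klOf T X) = X := rfl

/-- The lift of `L` to categories of coalgebras. -/
def Phi : (WKl T).Coalgebra ⥤ (WEM T).Coalgebra where
  obj V :=
    { A := (L T).obj V.A
      a := (L T).map V.a
      counit := by
        have h := congrArg ((L T).map) V.counit
        rw [Functor.map_comp, CategoryTheory.Functor.map_id, L_eps] at h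
        exact h
      coassoc := by
        have h := congrArg ((L T).map) V.coassoc
        rw [Functor.map_comp, Functor.map_comp, L_delta, ← L_W] at h
        exact h }
  map {V V'} m :=
    { f := (L T).map m.f
      h := by
        have h := congrArg ((L T).map) m.h
        rw [Functor.map_comp, Functor.map_comp, ← L_W] at h
        exact h }
  map_id V := by
    ext
    exact congrArg Monad.Algebra.Hom.f ((L T).map_id V.A)
  map_comp f g := by
    ext
    exact congrArg Monad.Algebra.Hom.f ((L T).map_comp f.f g.f)

instance Phi_faithful : (Phi T).Faithful where
  map_injective {V V'} {m m'} h := by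
    have hf : (L T).map m.f = (L T).map m'.f := congrArg Comonad.Coalgebra.Hom.f h
    ext
    exact congrArg Kleisli.Hom.of (L_faithful hf)

instance Phi_full : (Phi T).Full where
  map_surjective {V V'} m := by
    refine ⟨⟨Lpre m.f, ?_⟩, ?_⟩
    · apply L_faithful
      rw [Functor.map_comp, Functor.map_comp, ← L_W]
      erw [L_map_Lpre]
      exact m.h
    · ext
      exact congrArg Monad.Algebra.Hom.f (L_map_Lpre m.f)

end KleisliEMAux

namespace KleisliEMAux

variable {C : Type*} [Category C] (T : Monad C) [IsIdempotentComplete (Kleisli T)]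

instance Phi_essSurj : (Phi T).EssSurj where
  mem_essImage P := by
    -- component-level consequences of the coalgebra axioms for `P`
    have F3 : P.a.f ≫ T.map (T.η.app P.A.A) = P.a.f ≫ T.map P.a.f := by
      have h := congrArg Monad.Algebra.Hom.f P.coassoc
      simp only [Monad.Algebra.comp_f, delta_EM_f, WEM_map_f] at h
      exact h
    -- `P.a.f` is an idempotent in the Kleisli category
    have hp : (kl P.a.f : klOf T P.A.A ⟶ klOf T P.A.A) ≫ kl P.a.f = kl P.a.f := by
      apply Kleisli.hom_ext
      show hom' ((kl P.a.f : klOf T P.A.A ⟶ klOf T P.A.A) ≫ kl P.a.f) = P.a.f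
      rw [kl_comp]
      simp only [hom'_kl, obj'_klOf]
      show P.a.f ≫ T.map P.a.f ≫ T.μ.app P.A.A = P.a.f
      have key : ∀ (x : C) (g : x ⟶ T.obj x), g ≫ T.map (T.η.app x) = g ≫ T.map g →
          g ≫ T.map g ≫ T.μ.app x = g := by
        intro x g hg
        rw [← Category.assoc, ← hg, Category.assoc, T.right_unit]
        simp
      exact key _ P.a.f F3
    obtain ⟨Y, i, q, hiq, hqi⟩ :=
      IsIdempotentComplete.idempotents_split (klOf T P.A.A) (kl P.a.f) hp
    -- the counit composed with the structure map is `L` of the idempotent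
    have key1 : (WEM T).ε.app P.A ≫ P.a
        = (L T).map (kl P.a.f : klOf T P.A.A ⟶ klOf T P.A.A) := by
      ext
      simp only [Monad.Algebra.comp_f, eps_EM_f, L_map_f, hom'_kl, obj'_klOf]
      exact P.a.h.symm
    obtain ⟨u, hu⟩ : ∃ u', u' = (L T).map i ≫ (WEM T).ε.app P.A := ⟨_, rfl⟩
    obtain ⟨v, hv⟩ : ∃ v', v' = P.a ≫ (L T).map q := ⟨_, rfl⟩
    have hLqi : (L T).map q ≫ (L T).map i
        = (L T).map (kl P.a.f : klOf T P.A.A ⟶ klOf T P.A.A) := by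
      rw [← Functor.map_comp, hqi]
    have hYid : i ≫ (kl P.a.f : klOf T P.A.A ⟶ klOf T P.A.A) ≫ q = 𝟙 Y := by
      rw [← hqi]
      calc i ≫ (q ≫ i) ≫ q = (i ≫ q) ≫ (i ≫ q) := by simp only [Category.assoc]
        _ = 𝟙 Y := by rw [hiq, Category.id_comp]
    have huv : u ≫ v = 𝟙 ((L T).obj Y) := by
      rw [hu, hv]
      erw [Category.assoc]
      erw [reassoc_of% key1, ← Functor.map_comp, ← Functor.map_comp, hYid,
        CategoryTheory.Functor.map_id]
    have hvu : v ≫ u = 𝟙 P.A := by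
      rw [hu, hv]
      erw [Category.assoc]
      erw [reassoc_of% hLqi, ← key1]
      erw [Category.assoc, reassoc_of% P.counit, P.counit]
    obtain ⟨c', hc'⟩ : ∃ c'', c'' = u ≫ P.a ≫ (WEM T : T.Algebra ⥤ T.Algebra).map v := ⟨_, rfl⟩
    have hWvu : (WEM T : T.Algebra ⥤ T.Algebra).map v ≫ (WEM T : T.Algebra ⥤ T.Algebra).map u
        = 𝟙 _ := by
      rw [← Functor.map_comp, hvu, CategoryTheory.Functor.map_id]
    have hcε : c' ≫ (WEM T).ε.app ((L T).obj Y) = 𝟙 ((L T).obj Y) := by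
      rw [hc']
      simp only [Category.assoc]
      rw [(WEM T).ε.naturality v]
      simp only [Functor.id_map]
      rw [reassoc_of% P.counit]
      exact huv
    have hcu : c' ≫ (WEM T : T.Algebra ⥤ T.Algebra).map u = u ≫ P.a := by
      rw [hc']
      simp only [Category.assoc]
      rw [hWvu, Category.comp_id]
    have hcδ : c' ≫ (WEM T).δ.app ((L T).obj Y)
        = c' ≫ (WEM T : T.Algebra ⥤ T.Algebra).map c' := by
      conv_lhs => rw [hc']
      simp only [Category.assoc]
      rw [(WEM T).δ.naturality v, reassoc_of% P.coassoc]
      simp only [Functor.comp_map]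
      conv_rhs => rw [hc']
      simp only [Functor.map_comp, Category.assoc]
      rw [reassoc_of% hWvu]
    refine ⟨⟨Y, Lpre c', ?_, ?_⟩, ⟨Comonad.Coalgebra.isoMk ⟨u, v, huv, hvu⟩ ?_⟩⟩
    · apply L_faithful
      rw [Functor.map_comp, CategoryTheory.Functor.map_id, L_eps]
      erw [L_map_Lpre]
      exact hcε
    · apply L_faithful
      rw [Functor.map_comp, Functor.map_comp, L_delta, ← L_W]
      erw [L_map_Lpre]
      exact hcδ
    · show (L T).map (Lpre c') ≫ (WEM T : T.Algebra ⥤ T.Algebra).map u = u ≫ P.a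
      erw [L_map_Lpre]
      exact hcu

instance Phi_isEquivalence : (Phi T).IsEquivalence := {}

end KleisliEMAux


/-- STATEMENT 8: for a monad `T` on `A`, the Kleisli adjunction induces a comonad `W_Kl` on
`Kl(T)` and the Eilenberg–Moore adjunction induces the comonad `W_EM = forget_T ⋙ free_T` on
`Alg(T)`.  If `A`, `Kl(T)` and `Alg(T)` are idempotent complete, the Eilenberg–Moore categories
of `W_Kl`-coalgebras and of `W_EM`-coalgebras are equivalent. -/
theorem kleisli_em_resolutions_equivalent_coalgebras
    {A : Type*} [Category A] (T : Monad A)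
    [IsIdempotentComplete A]
    [IsIdempotentComplete (Kleisli T)]
    [IsIdempotentComplete T.Algebra] :
    Nonempty (((Kleisli.Adjunction.adj T).toComonad).Coalgebra ≌
      ((T.adj).toComonad).Coalgebra) := by
  exact ⟨(KleisliEMAux.Phi T).asEquivalence⟩
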